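/- For every m ≥ 1 and every 0 ≤ i ≤ m, the following identity holds in ℤ[x_1,…,x_m]: L_i = Σ_{k=0}^{i} δ_{i,k}^m · B_k, where δ_{i,k}^m = Σ_{j=k}^{i} (−1)^{j−k} · binom(m−k, j−k) · binom(m, i−j), L_i = e_i(1,…,1,x_1,…,x_m) and B_k = e_k(1+x_1,…,1+x_m). -/

import Mathlib

open Polynomial

namespace StmtAux

variable {R : Type*} [CommRing R]

lemma esymm_zero' (s : Multiset R) : s.esymm 0 = 1 := by
  simp [Multiset.esymm, Multiset.powersetCard_zero_left]

lemma esymm_of_card_lt {s : Multiset R} {k : ℕ} (h : Multiset.card s < k) :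
    s.esymm k = 0 := by
  simp [Multiset.esymm, Multiset.powersetCard_eq_empty _ h]

lemma esymm_cons (a : R) (s : Multiset R) (k : ℕ) :
    (a ::ₘ s).esymm (k + 1) = s.esymm (k + 1) + a * s.esymm k := by
  rw [Multiset.esymm, Multiset.powersetCard_cons, Multiset.map_add, Multiset.sum_add,
    Multiset.map_map]
  simp only [Function.comp_def, Multiset.prod_cons]
  rw [Multiset.esymm, Multiset.esymm, ← Multiset.sum_map_mul_left]

lemma prod_add_mul_C (A B : Polynomial R) (s : Multiset R) :
    (s.map fun b => A + B * Polynomial.C b).prod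
      = ∑ k ∈ Finset.range (Multiset.card s + 1),
          Polynomial.C (s.esymm k) * B ^ k * A ^ (Multiset.card s - k) := by
  induction s using Multiset.induction with
  | empty => simp [esymm_zero']
  | cons a t ih =>
    rw [Multiset.map_cons, Multiset.prod_cons, ih, Multiset.card_cons]
    rw [Finset.sum_range_succ' (fun k => Polynomial.C ((a ::ₘ t).esymm k) * B ^ k *
      A ^ (Multiset.card t + 1 - k))]
    simp only [esymm_cons, esymm_zero', map_one, pow_zero, mul_one, one_mul, Nat.sub_zero,
      Nat.add_sub_cancel, map_add, map_mul]
    rw [add_mul, Finset.mul_sum, Finset.mul_sum]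
    have h1 : ∀ k ∈ Finset.range (Multiset.card t + 1),
        A * (Polynomial.C (t.esymm k) * B ^ k * A ^ (Multiset.card t - k))
          = Polynomial.C (t.esymm k) * B ^ k * A ^ (Multiset.card t + 1 - k) := by
      intro k hk
      rw [Finset.mem_range] at hk
      have : Multiset.card t + 1 - k = (Multiset.card t - k) + 1 := by omega
      rw [this, pow_succ]
      ring
    have h2 : ∀ k ∈ Finset.range (Multiset.card t + 1),
        B * Polynomial.C a * (Polynomial.C (t.esymm k) * B ^ k * A ^ (Multiset.card t - k))
          = Polynomial.C a * Polynomial.C (t.esymm k) * B ^ (k + 1)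
            * A ^ (Multiset.card t + 1 - (k + 1)) := by
      intro k hk
      have he : Multiset.card t + 1 - (k + 1) = Multiset.card t - k := by omega
      rw [he, pow_succ]
      ring
    rw [Finset.sum_congr rfl h1, Finset.sum_congr rfl h2]
    -- remains: Σ_{range (n+1)} C e_k B^k A^{n+1-k} + Σ C a C e_k B^{k+1} A^{n-k}
    --   = Σ_{range (n+1)} (C e_{k+1} + C a C e_k) B^{k+1} A^{n-k} + A^{n+1}
    rw [Finset.sum_range_succ' (fun k => Polynomial.C (t.esymm k) * B ^ k *
      A ^ (Multiset.card t + 1 - k))]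
    simp only [esymm_zero', map_one, pow_zero, mul_one, one_mul, Nat.sub_zero]
    have h3 : ∑ k ∈ Finset.range (Multiset.card t),
        Polynomial.C (t.esymm (k + 1)) * B ^ (k + 1) * A ^ (Multiset.card t + 1 - (k + 1))
        = ∑ k ∈ Finset.range (Multiset.card t + 1),
            Polynomial.C (t.esymm (k + 1)) * B ^ (k + 1) * A ^ (Multiset.card t - k) := by
      rw [Finset.sum_range_succ]
      rw [esymm_of_card_lt (by omega)]
      simp only [map_zero, zero_mul, add_zero]
      refine Finset.sum_congr rfl fun k hk => by
        rw [Finset.mem_range] at hk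
        congr 2
        omega
    rw [h3]
    have h4 : ∀ k ∈ Finset.range (Multiset.card t + 1),
        (Polynomial.C (t.esymm (k + 1)) + Polynomial.C a * Polynomial.C (t.esymm k)) * B ^ (k + 1)
            * A ^ (Multiset.card t + 1 - (k + 1))
          = Polynomial.C (t.esymm (k + 1)) * B ^ (k + 1) * A ^ (Multiset.card t - k)
            + Polynomial.C a * Polynomial.C (t.esymm k) * B ^ (k + 1)
              * A ^ (Multiset.card t + 1 - (k + 1)) := by
      intro k hk
      have he : Multiset.card t + 1 - (k + 1) = Multiset.card t - k := by omega
      rw [he]; ring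
    rw [Finset.sum_congr rfl h4, Finset.sum_add_distrib]
    ring

lemma coeff_prod_one_add (s : Multiset R) (k : ℕ) :
    ((s.map fun b => 1 + Polynomial.X * Polynomial.C b).prod).coeff k = s.esymm k := by
  rw [prod_add_mul_C 1 Polynomial.X s]
  simp only [one_pow, mul_one, finset_sum_coeff, coeff_C_mul_X_pow]
  by_cases h : k ≤ Multiset.card s
  · rw [Finset.sum_eq_single_of_mem k (Finset.mem_range.mpr (by omega))]
    · simp
    · intro j _ hj; simp [Ne.symm hj]
  · rw [Finset.sum_eq_zero, esymm_of_card_lt (by omega)]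
    intro j hj
    rw [Finset.mem_range] at hj
    rw [if_neg (by omega)]

lemma coeff_one_sub_X_pow (n k : ℕ) :
    ((1 - Polynomial.X : Polynomial R) ^ n).coeff k = (-1 : R) ^ k * n.choose k := by
  have h : (1 - Polynomial.X : Polynomial R) = -Polynomial.X + 1 := by ring
  rw [h, add_pow]
  have : ∀ j, ((-Polynomial.X : Polynomial R) ^ j * 1 ^ (n - j) * (n.choose j : Polynomial R))
      = Polynomial.C ((-1 : R) ^ j * (n.choose j : R)) * Polynomial.X ^ j := by
    intro j
    rw [one_pow, mul_one, map_mul, map_pow, map_neg, map_one, map_natCast, neg_pow]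
    ring
  rw [Finset.sum_congr rfl fun j _ => this j]
  rw [finset_sum_coeff]
  simp only [coeff_C_mul_X_pow]
  by_cases h2 : k ≤ n
  · rw [Finset.sum_eq_single_of_mem k (Finset.mem_range.mpr (by omega))]
    · simp
    · intro j _ hj; simp [Ne.symm hj]
  · rw [Finset.sum_eq_zero, Nat.choose_eq_zero_of_lt (by omega)]
    · simp
    · intro j hj
      rw [Finset.mem_range] at hj
      rw [if_neg (by omega)]

end StmtAux




open MvPolynomial

/-- `P_i = e_i(x_1, …, x_m)`, the `i`-th elementary symmetric polynomial in the variables. -/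
noncomputable def Psym (m i : ℕ) : MvPolynomial (Fin m) ℤ :=
  (((Finset.univ : Finset (Fin m)).val.map
    fun j => (X j : MvPolynomial (Fin m) ℤ)).esymm i)

/-- `L_i = e_i(1, …, 1, x_1, …, x_m)`, the `i`-th elementary symmetric polynomial in `2m`
arguments, of which `m` are equal to `1`. -/
noncomputable def Lsym (m i : ℕ) : MvPolynomial (Fin m) ℤ :=
  ((Multiset.replicate m (1 : MvPolynomial (Fin m) ℤ) +
    (Finset.univ : Finset (Fin m)).val.map
      fun j => (X j : MvPolynomial (Fin m) ℤ)).esymm i)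

/-- `B_i = e_i(1 + x_1, …, 1 + x_m)`. -/
noncomputable def Bsym (m i : ℕ) : MvPolynomial (Fin m) ℤ :=
  (((Finset.univ : Finset (Fin m)).val.map
    fun j => (1 + X j : MvPolynomial (Fin m) ℤ)).esymm i)

/-- `δ_{i,k}^m = Σ_{j=k}^{i} (-1)^{j-k} · binom(m-k, j-k) · binom(m, i-j)`. -/
def deltaCoef (m i k : ℕ) : ℤ :=
  ∑ j ∈ Finset.Icc k i,
    (-1 : ℤ) ^ (j - k) * ((m - k).choose (j - k) : ℤ) * (m.choose (i - j) : ℤ)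

/-- For `m ≥ 1` and `0 ≤ i ≤ m`: `L_i = Σ_{k=0}^{i} δ_{i,k}^m · B_k` in `ℤ[x_1,…,x_m]`. -/
theorem stmt10 (m : ℕ) (hm : 1 ≤ m) (i : ℕ) (hi : i ≤ m) :
    Lsym m i = ∑ k ∈ Finset.range (i + 1),
      (deltaCoef m i k : MvPolynomial (Fin m) ℤ) * Bsym m k := by
  classical
  set R := MvPolynomial (Fin m) ℤ with hR
  set xs : Multiset R := (Finset.univ : Finset (Fin m)).val.map (fun j => (X j : R)) with hxs
  set ys : Multiset R := (Finset.univ : Finset (Fin m)).val.map (fun j => (1 + X j : R)) with hys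
  have hcys : Multiset.card ys = m := by simp [hys]
  -- Step 1: express Lsym as a coefficient
  have hL : Lsym m i
      = ((Multiset.replicate m (1 : R) + xs).map
          fun b => 1 + Polynomial.X * Polynomial.C b).prod.coeff i :=
    (StmtAux.coeff_prod_one_add _ i).symm
  -- Step 2: split the product
  rw [Multiset.map_add, Multiset.prod_add] at hL
  have h1 : ((Multiset.replicate m (1 : R)).map
      fun b => 1 + Polynomial.X * Polynomial.C b).prod = (1 + Polynomial.X) ^ m := by
    rw [Multiset.map_replicate, Multiset.prod_replicate, map_one, mul_one]
  have h2 : (xs.map fun b => 1 + Polynomial.X * Polynomial.C b).prod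
      = ∑ k ∈ Finset.range (m + 1),
          Polynomial.C (Bsym m k) * Polynomial.X ^ k
            * (1 - Polynomial.X) ^ (m - k) := by
    have hmap : xs.map (fun b => 1 + Polynomial.X * Polynomial.C b)
        = ys.map fun b => (1 - Polynomial.X) + Polynomial.X * Polynomial.C b := by
      rw [hxs, hys, Multiset.map_map, Multiset.map_map]
      refine Multiset.map_congr rfl fun j _ => ?_
      simp only [Function.comp_apply, map_add, map_one]
      ring
    rw [hmap, StmtAux.prod_add_mul_C, hcys]
    rfl
  rw [h1, h2, Finset.mul_sum, finset_sum_coeff] at hL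
  -- Step 3: compute each coefficient
  have hterm : ∀ k ∈ Finset.range (m + 1),
      ((1 + Polynomial.X) ^ m * (Polynomial.C (Bsym m k) * Polynomial.X ^ k
        * (1 - Polynomial.X) ^ (m - k))).coeff i
      = (deltaCoef m i k : R) * Bsym m k := by
    intro k hk
    rw [Finset.mem_range] at hk
    have hre : (1 + Polynomial.X) ^ m * (Polynomial.C (Bsym m k) * Polynomial.X ^ k
        * (1 - Polynomial.X) ^ (m - k))
        = Polynomial.C (Bsym m k) * (Polynomial.X ^ k
            * ((1 - Polynomial.X) ^ (m - k) * (1 + Polynomial.X) ^ m)) := by ring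
    rw [hre, Polynomial.coeff_C_mul, Polynomial.coeff_X_pow_mul']
    by_cases hki : k ≤ i
    · rw [if_pos hki]
      have hq : ((1 - Polynomial.X) ^ (m - k) * (1 + Polynomial.X) ^ m
          : Polynomial R).coeff (i - k) = (deltaCoef m i k : R) := by
        rw [Polynomial.coeff_mul]
        rw [Finset.Nat.sum_antidiagonal_eq_sum_range_succ_mk]
        simp only [StmtAux.coeff_one_sub_X_pow, Polynomial.coeff_one_add_X_pow]
        rw [deltaCoef]
        push_cast
        refine (Finset.sum_nbij' (fun j => j - k) (fun a => a + k) ?_ ?_ ?_ ?_ ?_).symm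
        · intro j hj; rw [Finset.mem_Icc] at hj; rw [Finset.mem_range]; omega
        · intro a ha; rw [Finset.mem_range] at ha; rw [Finset.mem_Icc]; omega
        · intro j hj; rw [Finset.mem_Icc] at hj; omega
        · intro a ha; rw [Finset.mem_range] at ha; omega
        · intro j hj
          rw [Finset.mem_Icc] at hj
          have : i - k - (j - k) = i - j := by omega
          rw [this]
      rw [hq]; ring
    · rw [if_neg hki, mul_zero]
      have : deltaCoef m i k = 0 := by
        rw [deltaCoef, Finset.Icc_eq_empty (by omega), Finset.sum_empty]
      rw [this]
      push_cast
      ring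
  rw [Finset.sum_congr rfl hterm] at hL
  rw [hL]
  -- Step 4: shrink the range from m+1 to i+1
  refine (Finset.sum_subset (Finset.range_subset_range.mpr (by omega)) ?_).symm
  intro k hk hki
  rw [Finset.mem_range] at hk hki
  have : deltaCoef m i k = 0 := by
    rw [deltaCoef, Finset.Icc_eq_empty (by omega), Finset.sum_empty]
  rw [this]
  push_cast
  ring
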